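/- For t ≥ 5 and n ≥ t, sat(n, B(S_t)) = t - 1 = |E(S_t)|. -/

import Mathlib

open Finset

/-- A hypergraph `H` on `[n]` contains a Berge-`S_t` subhypergraph (`S_t` is the star on `t`
vertices): there are `t - 1` distinct hyperedges `E k` of `H` and distinct vertices
`c, v 1, …, v (t-1)` with `{c, v k} ⊆ E k` for every `k`. -/
def HasBergeStar (t n : ℕ) (H : Finset (Finset (Fin n))) : Prop :=
  ∃ (E : Fin (t - 1) → Finset (Fin n)) (c : Fin n) (v : Fin (t - 1) → Fin n),
    Function.Injective E ∧ Function.Injective v ∧ (∀ k, v k ≠ c) ∧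
      ∀ k, E k ∈ H ∧ c ∈ E k ∧ v k ∈ E k

/-- `H` (with all hyperedges of size at least 2) is Berge-`S_t` saturated: it contains no
Berge-`S_t` subhypergraph, but adding any new hyperedge of size at least 2 creates one. -/
def StarSat (t n : ℕ) (H : Finset (Finset (Fin n))) : Prop :=
  (∀ e ∈ H, 2 ≤ e.card) ∧ ¬ HasBergeStar t n H ∧
    ∀ e : Finset (Fin n), e ∉ H → 2 ≤ e.card → HasBergeStar t n (insert e H)

/-- The hypergraph `H_t(n)` on `[n]` with hyperedges `[n]`, `[n] \ {i}` for `i ∈ [t-3]`,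
and `[t-3]`. -/
def Ht (t n : ℕ) : Finset (Finset (Fin n)) :=
  insert (Finset.univ.filter (fun i : Fin n => (i : ℕ) < t - 3))
    (insert Finset.univ
      ((Finset.univ.filter (fun i : Fin n => (i : ℕ) < t - 3)).image
        (fun i => Finset.univ.erase i)))

section AuxStarSat

lemma sdr {α : Type*} [DecidableEq α] :
    ∀ (k : ℕ) (S : Fin k → Finset α), (∀ j : Fin k, (j : ℕ) < (S j).card) →
      ∃ v : Fin k → α, Function.Injective v ∧ ∀ j, v j ∈ S j := by
  intro k
  induction k with
  | zero => exact fun S _ => ⟨fun j => j.elim0, fun j => j.elim0, fun j => j.elim0⟩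
  | succ k ih =>
    intro S hS
    obtain ⟨v, hvinj, hv⟩ := ih (fun j => S j.castSucc) (fun j => by
      have := hS j.castSucc; simpa using this)
    have hex : (S (Fin.last k) \ (Finset.univ.image v)).Nonempty := by
      have hcard : (Finset.univ.image v).card ≤ k :=
        le_trans Finset.card_image_le (by simp)
      have h2 := hS (Fin.last k)
      simp only [Fin.val_last] at h2
      have h3 := Finset.le_card_sdiff (Finset.univ.image v) (S (Fin.last k))
      rw [← Finset.card_pos]
      omega
    obtain ⟨x, hx⟩ := hex
    rw [Finset.mem_sdiff] at hx
    have hxv : ∀ i : Fin k, v i ≠ x := by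
      intro i h
      exact hx.2 (Finset.mem_image.mpr ⟨i, Finset.mem_univ _, h⟩)
    refine ⟨Fin.snoc v x, ?_, ?_⟩
    · intro a b hab
      induction a using Fin.lastCases with
      | last =>
        induction b using Fin.lastCases with
        | last => rfl
        | cast b =>
          rw [Fin.snoc_last, Fin.snoc_castSucc] at hab
          exact absurd hab.symm (hxv b)
      | cast a =>
        induction b using Fin.lastCases with
        | last =>
          rw [Fin.snoc_last, Fin.snoc_castSucc] at hab
          exact absurd hab (hxv a)
        | cast b =>
          rw [Fin.snoc_castSucc, Fin.snoc_castSucc] at hab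
          exact congrArg Fin.castSucc (hvinj hab)
    · intro j
      induction j using Fin.lastCases with
      | last => simpa using hx.1
      | cast i => simpa using hv i


lemma cardA (h : t - 3 ≤ n) :
    (Finset.univ.filter (fun i : Fin n => (i : ℕ) < t - 3)).card = t - 3 := by
  have : (Finset.univ.filter (fun i : Fin n => (i : ℕ) < t - 3)) =
      Finset.image (Fin.castLE h) Finset.univ := by
    ext i
    simp only [mem_filter, mem_univ, true_and, mem_image]
    constructor
    · intro hi; exact ⟨⟨(i:ℕ), hi⟩, Fin.ext rfl⟩
    · rintro ⟨j, rfl⟩; exact j.2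
  rw [this, Finset.card_image_of_injective _ (Fin.castLE_injective h), Finset.card_univ,
    Fintype.card_fin]



lemma erase_inj_univ {i j : Fin n} (h : Finset.univ.erase i = Finset.univ.erase j) : i = j := by
  by_contra hne
  have : i ∈ Finset.univ.erase j := Finset.mem_erase.mpr ⟨hne, Finset.mem_univ i⟩
  rw [← h] at this
  exact (Finset.mem_erase.mp this).1 rfl



lemma mem_Ht {t n : ℕ} {s : Finset (Fin n)} :
    s ∈ Ht t n ↔ s = Finset.univ.filter (fun i : Fin n => (i : ℕ) < t - 3) ∨ s = Finset.univ ∨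
      ∃ i : Fin n, (i : ℕ) < t - 3 ∧ s = Finset.univ.erase i := by
  simp only [Ht, mem_insert, mem_image, mem_filter, mem_univ, true_and]
  constructor
  · rintro (h | h | ⟨i, hi, rfl⟩)
    · exact Or.inl h
    · exact Or.inr (Or.inl h)
    · exact Or.inr (Or.inr ⟨i, hi, rfl⟩)
  · rintro (h | h | ⟨i, hi, rfl⟩)
    · exact Or.inl h
    · exact Or.inr (Or.inl h)
    · exact Or.inr (Or.inr ⟨i, hi, rfl⟩)



section
variable {t n : ℕ} (ht : 5 ≤ t) (hn : t ≤ n)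

include ht hn

lemma cardHt : (Ht t n).card = t - 1 := by
  have h3n : t - 3 ≤ n := by omega
  have hA := cardA h3n
  have himg : ((Finset.univ.filter (fun i : Fin n => (i : ℕ) < t - 3)).image
      (fun i : Fin n => Finset.univ.erase i)).card = t - 3 := by
    rw [Finset.card_image_of_injective _ (fun i j h => erase_inj_univ h), hA]
  have hcerase : ∀ i : Fin n, (Finset.univ.erase i).card = n - 1 := by
    intro i; rw [Finset.card_erase_of_mem (Finset.mem_univ i), Finset.card_univ, Fintype.card_fin]
  have huniv : (Finset.univ : Finset (Fin n)).card = n := by simp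
  have h1 : (Finset.univ : Finset (Fin n)) ∉
      ((Finset.univ.filter (fun i : Fin n => (i : ℕ) < t - 3)).image
        (fun i : Fin n => Finset.univ.erase i)) := by
    intro h
    obtain ⟨i, -, hi⟩ := Finset.mem_image.mp h
    have := congrArg Finset.card hi
    rw [hcerase, huniv] at this
    omega
  have h2 : (Finset.univ.filter (fun i : Fin n => (i : ℕ) < t - 3)) ∉
      insert Finset.univ ((Finset.univ.filter (fun i : Fin n => (i : ℕ) < t - 3)).image
        (fun i : Fin n => Finset.univ.erase i)) := by
    intro h
    rcases Finset.mem_insert.mp h with h | h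
    · have := congrArg Finset.card h; rw [hA, huniv] at this; omega
    · obtain ⟨i, -, hi⟩ := Finset.mem_image.mp h
      have := congrArg Finset.card hi.symm
      rw [hcerase, hA] at this
      omega
  rw [Ht, Finset.card_insert_of_notMem h2, Finset.card_insert_of_notMem h1, himg]
  omega



lemma cardHtedges : ∀ e ∈ Ht t n, 2 ≤ e.card := by
  intro e he
  rcases mem_Ht.mp he with rfl | rfl | ⟨i, hi, rfl⟩
  · rw [cardA (by omega)]; omega
  · simp only [Finset.card_univ, Fintype.card_fin]; omega
  · rw [Finset.card_erase_of_mem (Finset.mem_univ i), Finset.card_univ, Fintype.card_fin]; omega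



end

lemma star_common {t n : ℕ} {K : Finset (Finset (Fin n))} (hstar : HasBergeStar t n K)
    (hK : K.card ≤ t - 1) : K.card = t - 1 ∧ ∃ c : Fin n, ∀ s ∈ K, c ∈ s := by
  obtain ⟨E, c, v, hEinj, -, -, hmem⟩ := hstar
  have hsub : Finset.univ.image E ⊆ K := by
    intro s hs
    obtain ⟨k, -, rfl⟩ := Finset.mem_image.mp hs
    exact (hmem k).1
  have hcard : (Finset.univ.image E).card = t - 1 := by
    rw [Finset.card_image_of_injective _ hEinj, Finset.card_univ, Fintype.card_fin]
  have hle : t - 1 ≤ K.card := hcard ▸ Finset.card_le_card hsub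
  have heq : Finset.univ.image E = K :=
    Finset.eq_of_subset_of_card_le hsub (by omega)
  refine ⟨by omega, c, fun s hs => ?_⟩
  rw [← heq] at hs
  obtain ⟨k, -, rfl⟩ := Finset.mem_image.mp hs
  exact (hmem k).2.1



lemma noStarHt {t n : ℕ} (ht : 5 ≤ t) (hn : t ≤ n) : ¬ HasBergeStar t n (Ht t n) := by
  intro hstar
  obtain ⟨-, c, hc⟩ := star_common hstar (le_of_eq (cardHt ht hn))
  have hcA : c ∈ Finset.univ.filter (fun i : Fin n => (i : ℕ) < t - 3) :=
    hc _ (mem_Ht.mpr (Or.inl rfl))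
  have hclt : (c : ℕ) < t - 3 := (Finset.mem_filter.mp hcA).2
  have : c ∈ Finset.univ.erase c :=
    hc _ (mem_Ht.mpr (Or.inr (Or.inr ⟨c, hclt, rfl⟩)))
  exact (Finset.mem_erase.mp this).1 rfl

lemma lowerBound {t n : ℕ} (ht : 5 ≤ t) (hn : t ≤ n) {H : Finset (Finset (Fin n))} (hsat : StarSat t n H) :
    t - 1 ≤ H.card := by
  by_contra hlt
  push_neg at hlt
  have hHle : H.card ≤ t - 2 := by omega
  obtain ⟨hedges, hnostar, hsatadd⟩ := hsat
  -- key: for any pair not in H, get a common vertex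
  have key : ∀ a b : Fin n, a ≠ b → ({a, b} : Finset (Fin n)) ∉ H →
      H.card = t - 2 ∧ ∃ c ∈ ({a, b} : Finset (Fin n)), ∀ s ∈ H, c ∈ s := by
    intro a b hab hp
    have hcard2 : ({a, b} : Finset (Fin n)).card = 2 := Finset.card_pair hab
    have hstar := hsatadd _ hp (le_of_eq hcard2.symm)
    have hins : (insert ({a, b} : Finset (Fin n)) H).card = H.card + 1 :=
      Finset.card_insert_of_notMem hp
    obtain ⟨hcardeq, c, hc⟩ := star_common hstar (by omega)
    exact ⟨by omega, c, hc _ (Finset.mem_insert_self _ _), fun s hs =>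
      hc s (Finset.mem_insert_of_mem hs)⟩
  -- pigeonhole: for any x there is y ≠ x with {x,y} ∉ H
  have pig : ∀ x : Fin n, ∃ y : Fin n, y ≠ x ∧ ({x, y} : Finset (Fin n)) ∉ H := by
    intro x
    by_contra hall
    push_neg at hall
    have hinj : Set.InjOn (fun y : Fin n => ({x, y} : Finset (Fin n)))
        (Finset.univ.erase x) := by
      intro y hy y' hy' hyy'
      change ({x, y} : Finset (Fin n)) = {x, y'} at hyy'
      have : y ∈ ({x, y'} : Finset (Fin n)) := by
        rw [← hyy']; simp
      rcases Finset.mem_insert.mp this with h | h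
      · exact absurd h (Finset.mem_erase.mp (by exact_mod_cast hy)).1
      · exact Finset.mem_singleton.mp h
    have hmaps : ∀ y ∈ Finset.univ.erase x,
        (fun y : Fin n => ({x, y} : Finset (Fin n))) y ∈ H := by
      intro y hy
      exact hall y (Finset.mem_erase.mp hy).1
    have hcardle := Finset.card_le_card_of_injOn _ hmaps hinj
    rw [Finset.card_erase_of_mem (Finset.mem_univ x), Finset.card_univ, Fintype.card_fin]
      at hcardle
    omega
  -- H.card = t - 2 (≥ 3)
  obtain ⟨y1, hy1, hp1⟩ := pig ⟨0, by omega⟩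
  have hH2 : H.card = t - 2 := (key _ _ (Ne.symm hy1) hp1).1
  -- there is an edge E0 and x ∉ E0
  have hex : ∃ E0 ∈ H, ∃ x : Fin n, x ∉ E0 := by
    by_contra hno
    push_neg at hno
    have : H ⊆ {Finset.univ} := by
      intro s hs
      rw [Finset.mem_singleton]
      exact Finset.eq_univ_of_forall (fun x => hno s hs x)
    have := Finset.card_le_card this
    simp at this
    omega
  obtain ⟨E0, hE0, x, hxE0⟩ := hex
  -- y0 ∈ every edge
  obtain ⟨y0, hy0x, hp0⟩ := pig x
  have hy0 : ∀ s ∈ H, y0 ∈ s := by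
    obtain ⟨-, c, hc, hcall⟩ := key x y0 (Ne.symm hy0x) hp0
    rcases Finset.mem_insert.mp hc with rfl | hc
    · exact absurd (hcall _ hE0) hxE0
    · obtain rfl := Finset.mem_singleton.mp hc
      exact hcall
  -- every w ∉ {x, y0} is in every edge
  have hw : ∀ w : Fin n, w ≠ x → w ≠ y0 → ∀ s ∈ H, w ∈ s := by
    intro w hwx hwy0
    have hpw : ({x, w} : Finset (Fin n)) ∉ H := by
      intro hmem
      have := hy0 _ hmem
      rcases Finset.mem_insert.mp this with h | h
      · exact hy0x h
      · exact hwy0 (Finset.mem_singleton.mp h).symm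
    obtain ⟨-, c, hc, hcall⟩ := key x w (Ne.symm hwx) hpw
    rcases Finset.mem_insert.mp hc with rfl | hc
    · exact absurd (hcall _ hE0) hxE0
    · rw [Finset.mem_singleton.mp hc] at hcall
      exact hcall
  -- so every edge ⊇ univ.erase x, hence H ⊆ {univ, univ.erase x}
  have hsub : H ⊆ {Finset.univ, Finset.univ.erase x} := by
    intro s hs
    have hsup : Finset.univ.erase x ⊆ s := by
      intro w hwmem
      have hwx := (Finset.mem_erase.mp hwmem).1
      by_cases hwy : w = y0
      · exact hwy ▸ hy0 s hs
      · exact hw w hwx hwy s hs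
    rcases Finset.mem_insert.mp (Finset.mem_insert_self s {Finset.univ.erase x}) with h | h
    all_goals {
      by_cases hxs : x ∈ s
      · refine Finset.mem_insert.mpr (Or.inl ?_)
        apply Finset.eq_univ_of_forall
        intro w
        by_cases hwx : w = x
        · exact hwx ▸ hxs
        · exact hsup (Finset.mem_erase.mpr ⟨hwx, Finset.mem_univ w⟩)
      · refine Finset.mem_insert.mpr (Or.inr (Finset.mem_singleton.mpr ?_))
        apply Finset.Subset.antisymm
        · intro w hws
          refine Finset.mem_erase.mpr ⟨?_, Finset.mem_univ w⟩
          rintro rfl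
          exact hxs hws
        · exact hsup
    }
  have := Finset.card_le_card hsub
  have h2 : ({Finset.univ, Finset.univ.erase x} : Finset (Finset (Fin n))).card ≤ 2 :=
    Finset.card_insert_le _ _ |>.trans (by simp)
  omega



lemma sat_case2 {t n : ℕ} (ht : 5 ≤ t) (hn : t ≤ n) (e : Finset (Fin n)) (he : e ∉ Ht t n)
    (hce : 2 ≤ e.card) (hbig : ∀ a ∈ e, t - 3 ≤ (a : ℕ)) :
    HasBergeStar t n (insert e (Ht t n)) := by
  have h3n : t - 3 < n := by omega
  -- choose c and x
  obtain ⟨c, hc⟩ := Finset.card_pos.mp (by omega : 0 < e.card)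
  have hcbig : t - 3 ≤ (c : ℕ) := hbig c hc
  obtain ⟨x, hx⟩ : (e.erase c).Nonempty := by
    rw [← Finset.card_pos, Finset.card_erase_of_mem hc]; omega
  have hxe : x ∈ e := (Finset.mem_erase.mp hx).2
  have hxc : x ≠ c := (Finset.mem_erase.mp hx).1
  -- the enumeration and SDR
  set ι : Fin (t-2) → Fin n := fun j =>
    if h : (j : ℕ) < t - 3 then (⟨(j : ℕ), lt_trans h h3n⟩ : Fin n) else c with hι
  set S : Fin (t-2) → Finset (Fin n) := fun j => Finset.univ \ {c, x, ι j} with hS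
  have hScard : ∀ j : Fin (t-2), (j : ℕ) < (S j).card := by
    intro j
    have hsub : ({c, x, ι j} : Finset (Fin n)) ⊆ Finset.univ := Finset.subset_univ _
    have hcard3 : ({c, x, ι j} : Finset (Fin n)).card ≤ 3 :=
      le_trans (Finset.card_insert_le _ _) (by
        have := Finset.card_insert_le x ({ι j} : Finset (Fin n)); simp at this ⊢; omega)
    have hsd : (S j).card = n - ({c, x, ι j} : Finset (Fin n)).card := by
      rw [hS]; simp only []
      rw [Finset.card_sdiff_of_subset hsub, Finset.card_univ, Fintype.card_fin]
    by_cases hj : (j : ℕ) < t - 3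
    · omega
    · -- last index: ι j = c
      have hιc : ι j = c := by rw [hι]; simp only [dif_neg hj]
      have hcard2 : ({c, x, ι j} : Finset (Fin n)).card ≤ 2 := by
        rw [hιc]
        have : ({c, x, c} : Finset (Fin n)) = {c, x} := by
          ext a; simp; tauto
        rw [this]
        exact le_trans (Finset.card_insert_le _ _) (by simp)
      have hj2 := j.isLt
      omega
  obtain ⟨w, hwinj, hw⟩ := sdr _ S hScard
  have hwS : ∀ j, w j ≠ c ∧ w j ≠ x ∧ w j ≠ ι j := by
    intro j
    have := hw j
    rw [hS] at this
    simp only [Finset.mem_sdiff, Finset.mem_univ, true_and, Finset.mem_insert,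
      Finset.mem_singleton] at this
    tauto
  -- index helper
  have hidx : ∀ k : Fin (t-1), (k : ℕ) - 1 < t - 2 := fun k => by have := k.isLt; omega
  set idx : Fin (t-1) → Fin (t-2) := fun k => ⟨(k : ℕ) - 1, hidx k⟩ with hidxdef
  -- the star
  refine ⟨fun k => if (k : ℕ) = 0 then e else
      if (k : ℕ) - 1 < t - 3 then Finset.univ.erase (ι (idx k)) else Finset.univ,
    c,
    fun k => if (k : ℕ) = 0 then x else w (idx k), ?_, ?_, ?_, ?_⟩
  · -- E injective
    intro k k' hkk'
    simp only [] at hkk'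
    have hιval : ∀ j : Fin (t-2), (j : ℕ) < t - 3 → (ι j : ℕ) = (j : ℕ) := by
      intro j hj; rw [hι]; simp only [dif_pos hj]
    have hEHt : ∀ b : Fin (t-1), (b : ℕ) ≠ 0 →
        (if (b : ℕ) = 0 then e else
          if (b : ℕ) - 1 < t - 3 then Finset.univ.erase (ι (idx b)) else Finset.univ) ∈ Ht t n := by
      intro b hb
      rw [if_neg hb]
      by_cases h1 : (b : ℕ) - 1 < t - 3
      · rw [if_pos h1]
        exact mem_Ht.mpr (Or.inr (Or.inr ⟨ι (idx b), by rw [hιval _ h1]; exact h1, rfl⟩))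
      · rw [if_neg h1]
        exact mem_Ht.mpr (Or.inr (Or.inl rfl))
    by_cases hk : (k : ℕ) = 0 <;> by_cases hk' : (k' : ℕ) = 0
    · exact Fin.ext (by omega)
    · exfalso; rw [if_pos hk] at hkk'; exact he (hkk' ▸ hEHt k' hk')
    · exfalso; rw [if_pos hk'] at hkk'; exact he (hkk'.symm ▸ hEHt k hk)
    · rw [if_neg hk, if_neg hk'] at hkk'
      by_cases h1 : (k : ℕ) - 1 < t - 3 <;> by_cases h1' : (k' : ℕ) - 1 < t - 3
      · rw [if_pos h1, if_pos h1'] at hkk'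
        have : ι (idx k) = ι (idx k') := by
          by_contra hne
          have : ι (idx k) ∈ Finset.univ.erase (ι (idx k')) :=
            Finset.mem_erase.mpr ⟨hne, Finset.mem_univ _⟩
          rw [← hkk'] at this
          exact (Finset.mem_erase.mp this).1 rfl
        have hv := congrArg (fun z : Fin n => (z : ℕ)) this
        rw [hιval _ h1, hιval _ h1'] at hv
        exact Fin.ext (by simp [hidxdef] at hv; omega)
      · exfalso
        rw [if_pos h1, if_neg h1'] at hkk'
        have := congrArg Finset.card hkk'
        rw [Finset.card_erase_of_mem (Finset.mem_univ _), Finset.card_univ, Fintype.card_fin]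
          at this
        omega
      · exfalso
        rw [if_neg h1, if_pos h1'] at hkk'
        have := congrArg Finset.card hkk'
        rw [Finset.card_erase_of_mem (Finset.mem_univ _), Finset.card_univ, Fintype.card_fin]
          at this
        omega
      · exact Fin.ext (by omega)
  · -- v injective
    intro k k' hkk'
    simp only [] at hkk'
    by_cases hk : (k : ℕ) = 0 <;> by_cases hk' : (k' : ℕ) = 0
    · exact Fin.ext (by omega)
    · exfalso; rw [if_pos hk, if_neg hk'] at hkk'; exact (hwS (idx k')).2.1 hkk'.symm
    · exfalso; rw [if_neg hk, if_pos hk'] at hkk'; exact (hwS (idx k)).2.1 hkk'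
    · rw [if_neg hk, if_neg hk'] at hkk'
      have := hwinj hkk'
      rw [hidxdef] at this
      exact Fin.ext (by simpa [Fin.ext_iff] using (by
        have := congrArg (fun z : Fin (t-2) => (z : ℕ)) this
        simp at this
        omega : (k : ℕ) = (k' : ℕ)))
  · -- v k ≠ c
    intro k
    simp only []
    by_cases hk : (k : ℕ) = 0
    · rw [if_pos hk]; exact hxc
    · rw [if_neg hk]; exact (hwS (idx k)).1
  · -- memberships
    intro k
    simp only []
    by_cases hk : (k : ℕ) = 0
    · simp only [if_pos hk]
      exact ⟨Finset.mem_insert_self _ _, hc, hxe⟩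
    · simp only [if_neg hk]
      by_cases h1 : (k : ℕ) - 1 < t - 3
      · rw [if_pos h1]
        have hιval : (ι (idx k) : ℕ) = (k : ℕ) - 1 := by
          rw [hι]; simp only [hidxdef, dif_pos h1]
        refine ⟨Finset.mem_insert_of_mem (mem_Ht.mpr (Or.inr (Or.inr
          ⟨ι (idx k), by rw [hιval]; exact h1, rfl⟩))), ?_, ?_⟩
        · refine Finset.mem_erase.mpr ⟨?_, Finset.mem_univ _⟩
          intro hcc
          have := congrArg (fun z : Fin n => (z : ℕ)) hcc
          simp only [hιval] at this
          omega
        · exact Finset.mem_erase.mpr ⟨(hwS (idx k)).2.2, Finset.mem_univ _⟩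
      · rw [if_neg h1]
        exact ⟨Finset.mem_insert_of_mem (mem_Ht.mpr (Or.inr (Or.inl rfl))),
          Finset.mem_univ _, Finset.mem_univ _⟩


lemma sat_case1 {t n : ℕ} (ht : 5 ≤ t) (hn : t ≤ n) (e : Finset (Fin n)) (he : e ∉ Ht t n)
    (hce : 2 ≤ e.card) (c : Fin n) (hc : c ∈ e) (hclt : (c : ℕ) < t - 3) :
    HasBergeStar t n (insert e (Ht t n)) := by
  have h3n : t - 3 < n := by omega
  set A : Finset (Fin n) := Finset.univ.filter (fun i : Fin n => (i : ℕ) < t - 3) with hA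
  have hAHt : A ∈ Ht t n := mem_Ht.mpr (Or.inl rfl)
  have hcA : c ∈ A := Finset.mem_filter.mpr ⟨Finset.mem_univ _, hclt⟩
  have hAcard : A.card = t - 3 := cardA (by omega)
  -- choose x ∈ e \ {c}, y ∈ A \ {c}, x ≠ y
  have hxy : ∃ x y : Fin n, x ∈ e.erase c ∧ y ∈ A.erase c ∧ x ≠ y := by
    obtain ⟨x0, hx0⟩ : (e.erase c).Nonempty := by
      rw [← Finset.card_pos, Finset.card_erase_of_mem hc]; omega
    obtain ⟨y0, hy0⟩ : (A.erase c).Nonempty := by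
      rw [← Finset.card_pos, Finset.card_erase_of_mem hcA]; omega
    by_cases hne : x0 = y0
    · subst hne
      by_cases h1 : 1 < (e.erase c).card
      · obtain ⟨x1, hx1, hx1ne⟩ := Finset.exists_mem_ne h1 x0
        exact ⟨x1, x0, hx1, hy0, hx1ne⟩
      · by_cases h2 : 1 < (A.erase c).card
        · obtain ⟨y1, hy1, hy1ne⟩ := Finset.exists_mem_ne h2 x0
          exact ⟨x0, y1, hx0, hy1, fun h => hy1ne h.symm⟩
        · exfalso
          have he1 : e.erase c = {x0} :=
            Finset.eq_singleton_iff_unique_mem.mpr ⟨hx0, fun z hz => by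
              by_contra hzz
              have : 1 < (e.erase c).card := Finset.one_lt_card.mpr ⟨z, hz, x0, hx0, hzz⟩
              exact h1 this⟩
          have he2 : A.erase c = {x0} :=
            Finset.eq_singleton_iff_unique_mem.mpr ⟨hy0, fun z hz => by
              by_contra hzz
              have : 1 < (A.erase c).card := Finset.one_lt_card.mpr ⟨z, hz, x0, hy0, hzz⟩
              exact h2 this⟩
          have : e = A := by
            rw [← Finset.insert_erase hc, ← Finset.insert_erase hcA, he1, he2]
          exact he (this ▸ hAHt)
    · exact ⟨x0, y0, hx0, hy0, hne⟩
  obtain ⟨x, y, hx, hy, hxyne⟩ := hxy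
  have hxe : x ∈ e := (Finset.mem_erase.mp hx).2
  have hxc : x ≠ c := (Finset.mem_erase.mp hx).1
  have hyA : y ∈ A := (Finset.mem_erase.mp hy).2
  have hyc : y ≠ c := (Finset.mem_erase.mp hy).1
  -- the enumeration and SDR
  set ι : Fin (t-3) → Fin n := fun j =>
    if h : (j : ℕ) < t - 4 then
      (if (j : ℕ) < (c : ℕ) then (⟨(j : ℕ), by omega⟩ : Fin n)
        else (⟨(j : ℕ) + 1, by omega⟩ : Fin n))
    else c with hι
  have hιval : ∀ j : Fin (t-3), (j : ℕ) < t - 4 →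
      (ι j : ℕ) = if (j : ℕ) < (c : ℕ) then (j : ℕ) else (j : ℕ) + 1 := by
    intro j hj
    rw [hι]
    simp only [dif_pos hj]
    by_cases hjc : (j : ℕ) < (c : ℕ)
    · rw [if_pos hjc, if_pos hjc]
    · rw [if_neg hjc, if_neg hjc]
  have hιlt : ∀ j : Fin (t-3), (j : ℕ) < t - 4 → (ι j : ℕ) < t - 3 := by
    intro j hj
    rw [hιval j hj]
    by_cases hjc : (j : ℕ) < (c : ℕ) <;> simp [hjc] <;> omega
  have hιnec : ∀ j : Fin (t-3), (j : ℕ) < t - 4 → ι j ≠ c := by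
    intro j hj hcc
    have := congrArg (fun z : Fin n => (z : ℕ)) hcc
    simp only [hιval j hj] at this
    by_cases hjc : (j : ℕ) < (c : ℕ) <;> simp [hjc] at this <;> omega
  set S : Fin (t-3) → Finset (Fin n) := fun j => Finset.univ \ {c, x, y, ι j} with hS
  have hScard : ∀ j : Fin (t-3), (j : ℕ) < (S j).card := by
    intro j
    have hsd : (S j).card = n - ({c, x, y, ι j} : Finset (Fin n)).card := by
      rw [hS]; simp only []
      rw [Finset.card_sdiff_of_subset (Finset.subset_univ _), Finset.card_univ, Fintype.card_fin]
    by_cases hj : (j : ℕ) < t - 4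
    · have hcard4 : ({c, x, y, ι j} : Finset (Fin n)).card ≤ 4 := by
        refine le_trans (Finset.card_insert_le _ _) ?_
        have h1 := Finset.card_insert_le x ({y, ι j} : Finset (Fin n))
        have h2 := Finset.card_insert_le y ({ι j} : Finset (Fin n))
        simp at h1 h2 ⊢
        omega
      omega
    · have hιc : ι j = c := by rw [hι]; simp only [dif_neg hj]
      have hcard3 : ({c, x, y, ι j} : Finset (Fin n)).card ≤ 3 := by
        rw [hιc]
        have hsub : ({c, x, y, c} : Finset (Fin n)) ⊆ {c, x, y} := by
          intro a ha; simp at ha ⊢; tauto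
        refine le_trans (Finset.card_le_card hsub) ?_
        refine le_trans (Finset.card_insert_le _ _) ?_
        have := Finset.card_insert_le x ({y} : Finset (Fin n))
        simp at this ⊢
        omega
      have := j.isLt
      omega
  obtain ⟨w, hwinj, hw⟩ := sdr _ S hScard
  have hwS : ∀ j, w j ≠ c ∧ w j ≠ x ∧ w j ≠ y ∧ w j ≠ ι j := by
    intro j
    have := hw j
    rw [hS] at this
    simp only [Finset.mem_sdiff, Finset.mem_univ, true_and, Finset.mem_insert,
      Finset.mem_singleton] at this
    push_neg at this
    exact this
  have hidx : ∀ k : Fin (t-1), (k : ℕ) - 2 < t - 3 := fun k => by have := k.isLt; omega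
  set idx : Fin (t-1) → Fin (t-3) := fun k => ⟨(k : ℕ) - 2, hidx k⟩ with hidxdef
  refine ⟨fun k => if (k : ℕ) = 0 then e else if (k : ℕ) = 1 then A else
      if (k : ℕ) - 2 < t - 4 then Finset.univ.erase (ι (idx k)) else Finset.univ,
    c,
    fun k => if (k : ℕ) = 0 then x else if (k : ℕ) = 1 then y else w (idx k), ?_, ?_, ?_, ?_⟩
  · -- E injective
    have hcerase : ∀ z : Fin n, (Finset.univ.erase z : Finset (Fin n)).card = n - 1 := by
      intro z
      rw [Finset.card_erase_of_mem (Finset.mem_univ _), Finset.card_univ, Fintype.card_fin]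
    have hEHt : ∀ b : Fin (t-1), (b : ℕ) ≠ 0 →
        (if (b : ℕ) = 0 then e else if (b : ℕ) = 1 then A else
          if (b : ℕ) - 2 < t - 4 then Finset.univ.erase (ι (idx b)) else Finset.univ) ∈
          Ht t n := by
      intro b hb
      rw [if_neg hb]
      by_cases h2 : (b : ℕ) = 1
      · rw [if_pos h2]; exact hAHt
      · rw [if_neg h2]
        by_cases h1 : (b : ℕ) - 2 < t - 4
        · rw [if_pos h1]
          exact mem_Ht.mpr (Or.inr (Or.inr ⟨ι (idx b), hιlt _ h1, rfl⟩))
        · rw [if_neg h1]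
          exact mem_Ht.mpr (Or.inr (Or.inl rfl))
    intro k k' hkk'
    simp only [] at hkk'
    by_cases hk : (k : ℕ) = 0 <;> by_cases hk' : (k' : ℕ) = 0
    · exact Fin.ext (by omega)
    · exfalso; rw [if_pos hk] at hkk'; exact he (hkk' ▸ hEHt k' hk')
    · exfalso; rw [if_pos hk'] at hkk'; exact he (hkk'.symm ▸ hEHt k hk)
    · rw [if_neg hk, if_neg hk'] at hkk'
      by_cases h2 : (k : ℕ) = 1 <;> by_cases h2' : (k' : ℕ) = 1
      · exact Fin.ext (by omega)
      · exfalso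
        rw [if_pos h2, if_neg h2'] at hkk'
        by_cases h1' : (k' : ℕ) - 2 < t - 4
        · rw [if_pos h1'] at hkk'
          have := congrArg Finset.card hkk'
          rw [hAcard, hcerase] at this
          omega
        · rw [if_neg h1'] at hkk'
          have := congrArg Finset.card hkk'
          rw [hAcard, Finset.card_univ, Fintype.card_fin] at this
          omega
      · exfalso
        rw [if_neg h2, if_pos h2'] at hkk'
        by_cases h1 : (k : ℕ) - 2 < t - 4
        · rw [if_pos h1] at hkk'
          have := congrArg Finset.card hkk'
          rw [hAcard, hcerase] at this
          omega
        · rw [if_neg h1] at hkk'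
          have := congrArg Finset.card hkk'
          rw [hAcard, Finset.card_univ, Fintype.card_fin] at this
          omega
      · rw [if_neg h2, if_neg h2'] at hkk'
        by_cases h1 : (k : ℕ) - 2 < t - 4 <;> by_cases h1' : (k' : ℕ) - 2 < t - 4
        · rw [if_pos h1, if_pos h1'] at hkk'
          have hii : ι (idx k) = ι (idx k') := by
            by_contra hne
            have : ι (idx k) ∈ Finset.univ.erase (ι (idx k')) :=
              Finset.mem_erase.mpr ⟨hne, Finset.mem_univ _⟩
            rw [← hkk'] at this
            exact (Finset.mem_erase.mp this).1 rfl
          have hv := congrArg (fun z : Fin n => (z : ℕ)) hii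
          rw [hιval _ h1, hιval _ h1'] at hv
          have hik : ((idx k : Fin (t-3)) : ℕ) = (k : ℕ) - 2 := by rw [hidxdef]
          have hik' : ((idx k' : Fin (t-3)) : ℕ) = (k' : ℕ) - 2 := by rw [hidxdef]
          rw [hik, hik'] at hv
          refine Fin.ext ?_
          by_cases ha : (k : ℕ) - 2 < (c : ℕ) <;> by_cases hb : (k' : ℕ) - 2 < (c : ℕ) <;>
            simp [ha, hb] at hv <;> omega
        · exfalso
          rw [if_pos h1, if_neg h1'] at hkk'
          have := congrArg Finset.card hkk'
          rw [hcerase, Finset.card_univ, Fintype.card_fin] at this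
          omega
        · exfalso
          rw [if_neg h1, if_pos h1'] at hkk'
          have := congrArg Finset.card hkk'
          rw [hcerase, Finset.card_univ, Fintype.card_fin] at this
          omega
        · exact Fin.ext (by omega)
  · -- v injective
    intro k k' hkk'
    simp only [] at hkk'
    by_cases hk : (k : ℕ) = 0 <;> by_cases hk' : (k' : ℕ) = 0
    · exact Fin.ext (by omega)
    · rw [if_pos hk, if_neg hk'] at hkk'
      by_cases h2' : (k' : ℕ) = 1
      · rw [if_pos h2'] at hkk'; exact absurd hkk' hxyne
      · rw [if_neg h2'] at hkk'; exact absurd hkk'.symm (hwS (idx k')).2.1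
    · rw [if_neg hk, if_pos hk'] at hkk'
      by_cases h2 : (k : ℕ) = 1
      · rw [if_pos h2] at hkk'; exact absurd hkk'.symm hxyne
      · rw [if_neg h2] at hkk'; exact absurd hkk' (hwS (idx k)).2.1
    · rw [if_neg hk, if_neg hk'] at hkk'
      by_cases h2 : (k : ℕ) = 1 <;> by_cases h2' : (k' : ℕ) = 1
      · exact Fin.ext (by omega)
      · rw [if_pos h2, if_neg h2'] at hkk'; exact absurd hkk'.symm (hwS (idx k')).2.2.1
      · rw [if_neg h2, if_pos h2'] at hkk'; exact absurd hkk' (hwS (idx k)).2.2.1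
      · rw [if_neg h2, if_neg h2'] at hkk'
        have := hwinj hkk'
        have hv := congrArg (fun z : Fin (t-3) => (z : ℕ)) this
        rw [hidxdef] at hv
        simp at hv
        exact Fin.ext (by omega)
  · -- v k ≠ c
    intro k
    simp only []
    by_cases hk : (k : ℕ) = 0
    · rw [if_pos hk]; exact hxc
    · rw [if_neg hk]
      by_cases h2 : (k : ℕ) = 1
      · rw [if_pos h2]; exact hyc
      · rw [if_neg h2]; exact (hwS (idx k)).1
  · -- memberships
    intro k
    simp only []
    by_cases hk : (k : ℕ) = 0
    · simp only [if_pos hk]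
      exact ⟨Finset.mem_insert_self _ _, hc, hxe⟩
    · simp only [if_neg hk]
      by_cases h2 : (k : ℕ) = 1
      · simp only [if_pos h2]
        exact ⟨Finset.mem_insert_of_mem hAHt, hcA, hyA⟩
      · simp only [if_neg h2]
        by_cases h1 : (k : ℕ) - 2 < t - 4
        · simp only [if_pos h1]
          refine ⟨Finset.mem_insert_of_mem (mem_Ht.mpr (Or.inr (Or.inr
            ⟨ι (idx k), hιlt _ h1, rfl⟩))), ?_, ?_⟩
          · exact Finset.mem_erase.mpr ⟨fun hcc => hιnec _ h1 hcc.symm,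
              Finset.mem_univ _⟩
          · exact Finset.mem_erase.mpr ⟨(hwS (idx k)).2.2.2, Finset.mem_univ _⟩
        · simp only [if_neg h1]
          exact ⟨Finset.mem_insert_of_mem (mem_Ht.mpr (Or.inr (Or.inl rfl))),
            Finset.mem_univ _, Finset.mem_univ _⟩


end AuxStarSat

/-- For `t ≥ 5` and `n ≥ t`, `sat(n, B(S_t)) = t - 1 = |E(S_t)|`: the minimum number of
hyperedges of a Berge-`S_t` saturated hypergraph on `n` vertices is `t - 1`. -/
theorem sat_star (t n : ℕ) (ht : 5 ≤ t) (hn : t ≤ n) :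
    IsLeast {m : ℕ | ∃ H : Finset (Finset (Fin n)), StarSat t n H ∧ H.card = m} (t - 1) := by
  constructor
  · refine ⟨Ht t n, ⟨cardHtedges ht hn, noStarHt ht hn, ?_⟩, cardHt ht hn⟩
    intro e he hce
    by_cases hex : ∃ a ∈ e, (a : ℕ) < t - 3
    · obtain ⟨c, hc, hclt⟩ := hex
      exact sat_case1 ht hn e he hce c hc hclt
    · push_neg at hex
      exact sat_case2 ht hn e he hce (fun a ha => hex a ha)
  · rintro m ⟨H, hsat, rfl⟩
    exact lowerBound ht hn hsat
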